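/- Let E_1,...,E_m, M_1,...,M_m, Z_1,...,Z_m be random variables with values in finite sets on a common probability space, and let ε ≥ 0. Write M^j = (M_1,...,M_j) and Z^j = (Z_1,...,Z_j). Assume: (i) for every j in {1,...,m}, I(M_j; (E_j, Z_j)) ≤ ε and I(E_j; (M_j, Z_j)) ≤ ε; and (ii) for every j in {2,...,m}, the chaining Markov condition I((M^{j−1}, Z^{j−1}); (M_j, E_j, Z_j) | E_{j−1}) = 0 holds. Then the total leakage over the m blocks satisfies I(M^m; Z^m) ≤ ε·m·(m+1)/2. -/

import Mathlib

open Finset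

/-- Probability that the random variable `X` takes the value `a`, under the
probability mass function `p` on the finite sample space `Ω`. -/
noncomputable def probOf {Ω α : Type*} [Fintype Ω] [Fintype α] [DecidableEq α]
    (p : Ω → ℝ) (X : Ω → α) (a : α) : ℝ :=
  ∑ ω, if X ω = a then p ω else 0

/-- Shannon entropy (base 2) of the random variable `X`. -/
noncomputable def entropy {Ω α : Type*} [Fintype Ω] [Fintype α] [DecidableEq α]
    (p : Ω → ℝ) (X : Ω → α) : ℝ :=
  -∑ a, probOf p X a * Real.logb 2 (probOf p X a)

/-- Conditional entropy `H(X|Y)` (base 2). -/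
noncomputable def condEntropy {Ω α β : Type*} [Fintype Ω] [Fintype α] [Fintype β]
    [DecidableEq α] [DecidableEq β] (p : Ω → ℝ) (X : Ω → α) (Y : Ω → β) : ℝ :=
  entropy p (fun ω => (X ω, Y ω)) - entropy p Y

/-- Mutual information `I(X;Y)` (base 2). -/
noncomputable def mutualInfo {Ω α β : Type*} [Fintype Ω] [Fintype α] [Fintype β]
    [DecidableEq α] [DecidableEq β] (p : Ω → ℝ) (X : Ω → α) (Y : Ω → β) : ℝ :=
  entropy p X + entropy p Y - entropy p (fun ω => (X ω, Y ω))

/-- Conditional mutual information `I(X;Y|Z)` (base 2). -/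
noncomputable def condMutualInfo {Ω α β γ : Type*} [Fintype Ω] [Fintype α] [Fintype β]
    [Fintype γ] [DecidableEq α] [DecidableEq β] [DecidableEq γ]
    (p : Ω → ℝ) (X : Ω → α) (Y : Ω → β) (Z : Ω → γ) : ℝ :=
  entropy p (fun ω => (X ω, Z ω)) + entropy p (fun ω => (Y ω, Z ω))
    - entropy p (fun ω => (X ω, Y ω, Z ω)) - entropy p Z

section Basic
variable {Ω α β γ δ : Type*} [Fintype Ω] [Fintype α] [DecidableEq α]
  [Fintype β] [DecidableEq β] [Fintype γ] [DecidableEq γ] [Fintype δ] [DecidableEq δ]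
  (p : Ω → ℝ)

lemma probOf_nonneg (hp : ∀ ω, 0 ≤ p ω) (X : Ω → α) (a : α) : 0 ≤ probOf p X a := by
  apply Finset.sum_nonneg; intro ω _; split <;> simp [hp ω]

lemma sum_probOf (hp1 : ∑ ω, p ω = 1) (X : Ω → α) : ∑ a, probOf p X a = 1 := by
  unfold probOf
  rw [Finset.sum_comm]
  simpa using hp1

lemma probOf_mono (hp : ∀ ω, 0 ≤ p ω) {X : Ω → α} {Y : Ω → β} {a : α} {b : β}
    (h : ∀ ω, X ω = a → Y ω = b) : probOf p X a ≤ probOf p Y b := by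
  apply Finset.sum_le_sum; intro ω _
  by_cases hx : X ω = a
  · simp [hx, h ω hx]
  · simp only [if_neg hx]; split <;> simp [hp ω]

lemma sum_probOf_key (h : Ω → α) (g : α → ℝ) :
    ∑ d, probOf p h d * g d = ∑ ω, p ω * g (h ω) := by
  unfold probOf
  simp only [Finset.sum_mul, ite_mul, zero_mul]
  rw [Finset.sum_comm]
  congr 1; ext ω
  simp

lemma sum_probOf_mul (X : Ω → α) (f : α → δ) (g : δ → ℝ) :
    ∑ d, probOf p (fun ω => f (X ω)) d * g d = ∑ a, probOf p X a * g (f a) := by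
  rw [sum_probOf_key p (fun ω => f (X ω)) g, sum_probOf_key p X (fun a => g (f a))]

lemma sum_probOf_pair_left (U : Ω → α) (V : Ω → β) (c : β) :
    ∑ a, probOf p (fun ω => (U ω, V ω)) (a, c) = probOf p V c := by
  unfold probOf
  rw [Finset.sum_comm]
  congr 1; ext ω
  simp only [Prod.mk.injEq]
  simp [ite_and, Finset.sum_ite_eq, Finset.sum_ite_eq']

lemma entropy_comp_sum (X : Ω → α) (f : α → δ) :
    entropy p (fun ω => f (X ω))
      = -∑ a, probOf p X a * Real.logb 2 (probOf p (fun ω => f (X ω)) (f a)) := by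
  unfold entropy
  rw [sum_probOf_mul p X f (fun d => Real.logb 2 (probOf p (fun ω => f (X ω)) d))]

lemma probOf_eq_zero_of_not_mem {X : Ω → α} {a : α}
    (h : a ∉ Finset.univ.image X) : probOf p X a = 0 := by
  unfold probOf
  apply Finset.sum_eq_zero; intro ω _
  rw [if_neg]
  intro hx
  exact h (Finset.mem_image.2 ⟨ω, Finset.mem_univ ω, hx⟩)

lemma entropy_sum_image (W : Ω → α) :
    ∑ a : α, probOf p W a * Real.logb 2 (probOf p W a)
      = ∑ a ∈ Finset.univ.image W, probOf p W a * Real.logb 2 (probOf p W a) := by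
  refine (Finset.sum_subset (Finset.subset_univ _) ?_).symm
  intro a _ ha
  rw [probOf_eq_zero_of_not_mem p ha]; simp

lemma entropy_comp_of_inj (X : Ω → α) (f : α → δ)
    (hf : ∀ ω ω', f (X ω) = f (X ω') → X ω = X ω') :
    entropy p (fun ω => f (X ω)) = entropy p X := by
  unfold entropy
  congr 1
  rw [entropy_sum_image p (fun ω => f (X ω)), entropy_sum_image p X]
  have himg : Finset.univ.image (fun ω => f (X ω)) = (Finset.univ.image X).image f := by
    rw [Finset.image_image]; rfl
  rw [himg, Finset.sum_image]
  · apply Finset.sum_congr rfl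
    intro a ha
    obtain ⟨ω₀, _, rfl⟩ := Finset.mem_image.1 ha
    have : probOf p (fun ω => f (X ω)) (f (X ω₀)) = probOf p X (X ω₀) := by
      unfold probOf
      apply Finset.sum_congr rfl
      intro ω _
      refine if_congr ?_ rfl rfl
      constructor
      · exact hf ω ω₀
      · intro h; simp only []; rw [h]
    rw [this]
  · intro a ha b hb hab
    obtain ⟨ω₁, _, rfl⟩ := Finset.mem_image.1 ha
    obtain ⟨ω₂, _, rfl⟩ := Finset.mem_image.1 hb
    exact hf ω₁ ω₂ hab

lemma entropy_congr (hΩ : Nonempty Ω) {X : Ω → α} {X' : Ω → β}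
    (h : ∀ ω ω', X ω = X ω' ↔ X' ω = X' ω') : entropy p X = entropy p X' := by
  classical
  obtain ⟨ω₀⟩ := hΩ
  set f : α → β := fun a => if ha : ∃ ω, X ω = a then X' ha.choose else X' ω₀ with hfdef
  have hfX : ∀ ω, f (X ω) = X' ω := by
    intro ω
    have ha : ∃ ω', X ω' = X ω := ⟨ω, rfl⟩
    have : f (X ω) = X' ha.choose := by simp [hfdef, ha]
    rw [this]
    exact (h _ _).1 ha.choose_spec
  have : X' = fun ω => f (X ω) := by funext ω; rw [hfX]
  rw [this]
  apply (entropy_comp_of_inj p X f _).symm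
  intro ω ω' hff
  rw [hfX, hfX] at hff
  exact (h ω ω').2 hff

end Basic

section Gibbs

lemma gibbs {ι : Type*} [Fintype ι] (q r : ι → ℝ) (hq0 : ∀ i, 0 ≤ q i) (hr0 : ∀ i, 0 ≤ r i)
    (hq1 : ∑ i, q i = 1) (hr1 : ∑ i, r i ≤ 1) (hqr : ∀ i, 0 < q i → 0 < r i) :
    ∑ i, q i * Real.logb 2 (r i) ≤ ∑ i, q i * Real.logb 2 (q i) := by
  have hlog2 : (0:ℝ) < Real.log 2 := Real.log_pos (by norm_num)
  have key : ∀ i, q i * Real.logb 2 (r i) - q i * Real.logb 2 (q i)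
      ≤ (r i - q i) / Real.log 2 := by
    intro i
    rcases eq_or_lt_of_le (hq0 i) with h | h
    · rw [← h]
      simpa using div_nonneg (hr0 i) (le_of_lt hlog2)
    · have hr : 0 < r i := hqr i h
      have : Real.logb 2 (r i) - Real.logb 2 (q i) = Real.log (r i / q i) / Real.log 2 := by
        rw [Real.log_div (ne_of_gt hr) (ne_of_gt h)]
        unfold Real.logb
        ring
      rw [← mul_sub, this]
      have hle : Real.log (r i / q i) ≤ r i / q i - 1 :=
        Real.log_le_sub_one_of_pos (by positivity)
      calc q i * (Real.log (r i / q i) / Real.log 2)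
          ≤ q i * ((r i / q i - 1) / Real.log 2) := by
            apply mul_le_mul_of_nonneg_left _ (le_of_lt h)
            gcongr
        _ = (r i - q i) / Real.log 2 := by field_simp
  have : ∑ i, (q i * Real.logb 2 (r i) - q i * Real.logb 2 (q i))
      ≤ ∑ i, (r i - q i) / Real.log 2 := Finset.sum_le_sum (fun i _ => key i)
  rw [Finset.sum_sub_distrib] at this
  have h2 : ∑ i, (r i - q i) / Real.log 2 = ((∑ i, r i) - 1) / Real.log 2 := by
    rw [← Finset.sum_div, Finset.sum_sub_distrib, hq1]
  rw [h2] at this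
  have h3 : ((∑ i, r i) - 1) / Real.log 2 ≤ 0 := by
    apply div_nonpos_of_nonpos_of_nonneg _ (le_of_lt hlog2)
    linarith
  linarith

end Gibbs

section Nonneg
variable {Ω α β γ : Type*} [Fintype Ω] [Fintype α] [DecidableEq α]
  [Fintype β] [DecidableEq β] [Fintype γ] [DecidableEq γ]
  (p : Ω → ℝ)

lemma mutualInfo_nonneg' (hp : ∀ ω, 0 ≤ p ω) (hp1 : ∑ ω, p ω = 1)
    (X : Ω → α) (Y : Ω → β) : 0 ≤ mutualInfo p X Y := by
  set W : Ω → α × β := fun ω => (X ω, Y ω) with hW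
  set q : α × β → ℝ := probOf p W with hq
  have hq0 : ∀ c, 0 ≤ q c := probOf_nonneg p hp W
  have hX : entropy p X = -∑ c : α × β, q c * Real.logb 2 (probOf p X c.1) :=
    entropy_comp_sum p W Prod.fst
  have hY : entropy p Y = -∑ c : α × β, q c * Real.logb 2 (probOf p Y c.2) :=
    entropy_comp_sum p W Prod.snd
  set r : α × β → ℝ := fun c => probOf p X c.1 * probOf p Y c.2 with hr
  have hmargX : ∀ c : α × β, 0 < q c → 0 < probOf p X c.1 := by
    intro c hc
    refine lt_of_lt_of_le hc (probOf_mono p hp ?_)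
    intro ω hω; rw [← hω]
  have hmargY : ∀ c : α × β, 0 < q c → 0 < probOf p Y c.2 := by
    intro c hc
    refine lt_of_lt_of_le hc (probOf_mono p hp ?_)
    intro ω hω; rw [← hω]
  have hpt : ∀ c, q c * Real.logb 2 (probOf p X c.1) + q c * Real.logb 2 (probOf p Y c.2)
      = q c * Real.logb 2 (r c) := by
    intro c
    rcases eq_or_lt_of_le (hq0 c) with h | h
    · rw [← h]; ring
    · rw [hr]
      simp only []
      rw [Real.logb_mul (ne_of_gt (hmargX c h)) (ne_of_gt (hmargY c h))]
      ring
  have hgibbs : ∑ c, q c * Real.logb 2 (r c) ≤ ∑ c, q c * Real.logb 2 (q c) := by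
    apply gibbs
    · exact hq0
    · intro c
      exact mul_nonneg (probOf_nonneg p hp X c.1) (probOf_nonneg p hp Y c.2)
    · exact sum_probOf p hp1 W
    · have : ∑ c : α × β, r c = 1 := by
        rw [hr]
        rw [Fintype.sum_prod_type]
        simp only [← Finset.mul_sum]
        rw [← Finset.sum_mul]
        rw [sum_probOf p hp1 X, sum_probOf p hp1 Y]
        norm_num
      rw [this]
    · intro c hc
      exact mul_pos (hmargX c hc) (hmargY c hc)
  have hsum : ∑ c, (q c * Real.logb 2 (probOf p X c.1) + q c * Real.logb 2 (probOf p Y c.2))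
      = ∑ c, q c * Real.logb 2 (r c) := Finset.sum_congr rfl (fun c _ => hpt c)
  rw [Finset.sum_add_distrib] at hsum
  unfold mutualInfo
  rw [hX, hY]
  unfold entropy
  linarith

lemma condMutualInfo_nonneg' (hp : ∀ ω, 0 ≤ p ω) (hp1 : ∑ ω, p ω = 1)
    (X : Ω → α) (Y : Ω → β) (Z : Ω → γ) :
    0 ≤ condMutualInfo p X Y Z := by
  classical
  set W : Ω → α × β × γ := fun ω => (X ω, Y ω, Z ω) with hW
  set q : α × β × γ → ℝ := probOf p W with hq
  have hq0 : ∀ c, 0 ≤ q c := probOf_nonneg p hp W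
  set PXZ : α × γ → ℝ := probOf p (fun ω => (X ω, Z ω)) with hPXZ
  set PYZ : β × γ → ℝ := probOf p (fun ω => (Y ω, Z ω)) with hPYZ
  set PZ : γ → ℝ := probOf p Z with hPZ
  have hPZ0 : ∀ z, 0 ≤ PZ z := probOf_nonneg p hp Z
  have hXZ : entropy p (fun ω => (X ω, Z ω))
      = -∑ c : α × β × γ, q c * Real.logb 2 (PXZ (c.1, c.2.2)) :=
    entropy_comp_sum p W (fun c => (c.1, c.2.2))
  have hYZ : entropy p (fun ω => (Y ω, Z ω))
      = -∑ c : α × β × γ, q c * Real.logb 2 (PYZ c.2) :=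
    entropy_comp_sum p W Prod.snd
  have hZ : entropy p Z = -∑ c : α × β × γ, q c * Real.logb 2 (PZ c.2.2) :=
    entropy_comp_sum p W (fun c => c.2.2)
  set r : α × β × γ → ℝ := fun c =>
    if PZ c.2.2 = 0 then 0 else PXZ (c.1, c.2.2) * PYZ c.2 / PZ c.2.2 with hr
  have hmXZ : ∀ c : α × β × γ, 0 < q c → 0 < PXZ (c.1, c.2.2) := by
    intro c hc
    refine lt_of_lt_of_le hc (probOf_mono p hp ?_)
    intro ω hω; rw [← hω]
  have hmYZ : ∀ c : α × β × γ, 0 < q c → 0 < PYZ c.2 := by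
    intro c hc
    refine lt_of_lt_of_le hc (probOf_mono p hp ?_)
    intro ω hω; rw [← hω]
  have hmZ : ∀ c : α × β × γ, 0 < q c → 0 < PZ c.2.2 := by
    intro c hc
    refine lt_of_lt_of_le hc (probOf_mono p hp ?_)
    intro ω hω; rw [← hω]
  have hpt : ∀ c, q c * Real.logb 2 (PXZ (c.1, c.2.2)) + q c * Real.logb 2 (PYZ c.2)
      - q c * Real.logb 2 (PZ c.2.2) = q c * Real.logb 2 (r c) := by
    intro c
    rcases eq_or_lt_of_le (hq0 c) with h | h
    · rw [← h]; ring
    · have h1 := hmXZ c h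
      have h2 := hmYZ c h
      have h3 := hmZ c h
      rw [hr]
      simp only [if_neg (ne_of_gt h3)]
      rw [Real.logb_div (by positivity) (ne_of_gt h3),
        Real.logb_mul (ne_of_gt h1) (ne_of_gt h2)]
      ring
  have hmargXZ : ∀ z : γ, ∑ a : α, PXZ (a, z) = PZ z := fun z => sum_probOf_pair_left p X Z z
  have hmargYZ : ∀ z : γ, ∑ b : β, PYZ (b, z) = PZ z := fun z => sum_probOf_pair_left p Y Z z
  have hgibbs : ∑ c, q c * Real.logb 2 (r c) ≤ ∑ c, q c * Real.logb 2 (q c) := by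
    apply gibbs
    · exact hq0
    · intro c
      rw [hr]
      simp only []
      split
      · exact le_rfl
      · have := hPZ0 c.2.2
        apply div_nonneg (mul_nonneg (probOf_nonneg p hp _ _) (probOf_nonneg p hp _ _)) this
    · exact sum_probOf p hp1 W
    · have hswap : ∑ c : α × β × γ, r c = ∑ z : γ, ∑ a : α, ∑ b : β, r (a, b, z) := by
        rw [Fintype.sum_prod_type]
        simp_rw [Fintype.sum_prod_type]
        have inner : ∀ a : α, ∑ b : β, ∑ z : γ, r (a, b, z)
            = ∑ z : γ, ∑ b : β, r (a, b, z) := fun a => Finset.sum_comm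
        simp_rw [inner]
        exact Finset.sum_comm
      rw [hswap]
      have hz : ∀ z : γ, ∑ a : α, ∑ b : β, r (a, b, z) ≤ PZ z := by
        intro z
        by_cases hz0 : PZ z = 0
        · simp only [hr, hz0, if_pos rfl]
          simp [hPZ0 z]
        · simp only [hr, if_neg hz0]
          have : ∑ a : α, ∑ b : β, PXZ (a, z) * PYZ (b, z) / PZ z
              = (∑ a : α, PXZ (a, z)) * (∑ b : β, PYZ (b, z)) / PZ z := by
            rw [Finset.sum_mul, Finset.sum_div]
            apply Finset.sum_congr rfl
            intro a _
            rw [← Finset.sum_div, ← Finset.mul_sum]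
          rw [this, hmargXZ, hmargYZ]
          rw [mul_div_assoc, div_self hz0, mul_one]
      calc ∑ z : γ, ∑ a : α, ∑ b : β, r (a, b, z) ≤ ∑ z : γ, PZ z :=
            Finset.sum_le_sum (fun z _ => hz z)
        _ = 1 := sum_probOf p hp1 Z
    · intro c hc
      have h1 := hmXZ c hc
      have h2 := hmYZ c hc
      have h3 := hmZ c hc
      rw [hr]
      simp only [if_neg (ne_of_gt h3)]
      positivity
  have hsum : ∑ c, (q c * Real.logb 2 (PXZ (c.1, c.2.2)) + q c * Real.logb 2 (PYZ c.2)
      - q c * Real.logb 2 (PZ c.2.2)) = ∑ c, q c * Real.logb 2 (r c) :=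
    Finset.sum_congr rfl (fun c _ => hpt c)
  rw [Finset.sum_sub_distrib, Finset.sum_add_distrib] at hsum
  unfold condMutualInfo
  rw [hXZ, hYZ, hZ]
  unfold entropy
  linarith

end Nonneg

section Ident
variable {Ω α β γ δ : Type*} [Fintype Ω] [Fintype α] [DecidableEq α]
  [Fintype β] [DecidableEq β] [Fintype γ] [DecidableEq γ] [Fintype δ] [DecidableEq δ]
  (p : Ω → ℝ)

lemma nonempty_of_sum_one (hp1 : ∑ ω, p ω = 1) : Nonempty Ω := by
  by_contra hne
  rw [not_nonempty_iff] at hne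
  rw [Finset.univ_eq_empty, Finset.sum_empty] at hp1
  norm_num at hp1

lemma mutualInfo_congr_left (hΩ : Nonempty Ω) {X : Ω → α} {X' : Ω → β} (Y : Ω → γ)
    (h : ∀ ω ω', X ω = X ω' ↔ X' ω = X' ω') : mutualInfo p X Y = mutualInfo p X' Y := by
  unfold mutualInfo
  rw [entropy_congr p hΩ h,
    entropy_congr p hΩ (show ∀ ω ω', (X ω, Y ω) = (X ω', Y ω') ↔ (X' ω, Y ω) = (X' ω', Y ω')
      from fun ω ω' => by simp only [Prod.mk.injEq]; rw [h ω ω'])]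

lemma mutualInfo_congr_right (hΩ : Nonempty Ω) (X : Ω → α) {Y : Ω → β} {Y' : Ω → γ}
    (h : ∀ ω ω', Y ω = Y ω' ↔ Y' ω = Y' ω') : mutualInfo p X Y = mutualInfo p X Y' := by
  unfold mutualInfo
  rw [entropy_congr p hΩ h,
    entropy_congr p hΩ (show ∀ ω ω', (X ω, Y ω) = (X ω', Y ω') ↔ (X ω, Y' ω) = (X ω', Y' ω')
      from fun ω ω' => by simp only [Prod.mk.injEq]; rw [h ω ω'])]

lemma mutualInfo_comm' (hΩ : Nonempty Ω) (X : Ω → α) (Y : Ω → β) :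
    mutualInfo p X Y = mutualInfo p Y X := by
  unfold mutualInfo
  rw [entropy_congr p hΩ (show ∀ ω ω', (X ω, Y ω) = (X ω', Y ω') ↔ (Y ω, X ω) = (Y ω', X ω')
    from fun ω ω' => by simp only [Prod.mk.injEq]; tauto)]
  ring

lemma chain2 (X : Ω → α) (Y : Ω → β) (Z : Ω → γ) :
    mutualInfo p X (fun ω => (Y ω, Z ω)) = mutualInfo p X Z + condMutualInfo p X Y Z := by
  unfold mutualInfo condMutualInfo
  ring

lemma cond_chain (hΩ : Nonempty Ω) (A : Ω → α) (U : Ω → β) (V : Ω → γ) (C : Ω → δ) :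
    condMutualInfo p A (fun ω => (U ω, V ω)) C
      = condMutualInfo p A V C + condMutualInfo p A U (fun ω => (V ω, C ω)) := by
  unfold condMutualInfo
  rw [entropy_congr p hΩ
      (show ∀ ω ω', ((U ω, V ω), C ω) = ((U ω', V ω'), C ω')
          ↔ (U ω, V ω, C ω) = (U ω', V ω', C ω')
        from fun ω ω' => by simp only [Prod.mk.injEq]; tauto),
    entropy_congr p hΩ
      (show ∀ ω ω', (A ω, (U ω, V ω), C ω) = (A ω', (U ω', V ω'), C ω')
          ↔ (A ω, U ω, V ω, C ω) = (A ω', U ω', V ω', C ω')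
        from fun ω ω' => by simp only [Prod.mk.injEq]; tauto)]
  ring

lemma cmi_symm (hΩ : Nonempty Ω) (X : Ω → α) (Y : Ω → β) (Z : Ω → γ) :
    condMutualInfo p X Y Z = condMutualInfo p Y X Z := by
  unfold condMutualInfo
  rw [entropy_congr p hΩ
    (show ∀ ω ω', (X ω, Y ω, Z ω) = (X ω', Y ω', Z ω')
        ↔ (Y ω, X ω, Z ω) = (Y ω', X ω', Z ω')
      from fun ω ω' => by simp only [Prod.mk.injEq]; tauto)]
  ring

lemma entropy_const (hp1 : ∑ ω, p ω = 1) {X : Ω → α} (h : ∀ ω ω', X ω = X ω') :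
    entropy p X = 0 := by
  have hΩ : Nonempty Ω := nonempty_of_sum_one p hp1
  obtain ⟨ω₀⟩ := hΩ
  unfold entropy
  rw [neg_eq_zero]
  apply Finset.sum_eq_zero
  intro a _
  by_cases ha : a = X ω₀
  · have h1 : probOf p X a = 1 := by
      unfold probOf
      rw [← hp1]
      apply Finset.sum_congr rfl
      intro ω _
      rw [if_pos (by rw [h ω ω₀, ha])]
    rw [h1]; simp
  · have h0 : probOf p X a = 0 := by
      unfold probOf
      apply Finset.sum_eq_zero
      intro ω _
      rw [if_neg (by rw [h ω ω₀]; exact fun hc => ha hc.symm)]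
    rw [h0]; simp

lemma mutualInfo_const_left (hp1 : ∑ ω, p ω = 1) {X : Ω → α} (Y : Ω → β)
    (h : ∀ ω ω', X ω = X ω') : mutualInfo p X Y = 0 := by
  have hΩ : Nonempty Ω := nonempty_of_sum_one p hp1
  unfold mutualInfo
  rw [entropy_const p hp1 h,
    entropy_congr p hΩ (show ∀ ω ω', (X ω, Y ω) = (X ω', Y ω') ↔ Y ω = Y ω'
      from fun ω ω' => by simp only [Prod.mk.injEq]; exact ⟨fun hc => hc.2, fun hc => ⟨h ω ω', hc⟩⟩)]
  ring

lemma cmi_const_left (hΩ : Nonempty Ω) {X : Ω → α} (Y : Ω → β) (Z : Ω → γ)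
    (h : ∀ ω ω', X ω = X ω') : condMutualInfo p X Y Z = 0 := by
  unfold condMutualInfo
  rw [entropy_congr p hΩ (show ∀ ω ω', (X ω, Z ω) = (X ω', Z ω') ↔ Z ω = Z ω'
      from fun ω ω' => by simp only [Prod.mk.injEq]; exact ⟨fun hc => hc.2, fun hc => ⟨h ω ω', hc⟩⟩),
    entropy_congr p hΩ (show ∀ ω ω', (X ω, Y ω, Z ω) = (X ω', Y ω', Z ω') ↔ (Y ω, Z ω) = (Y ω', Z ω')
      from fun ω ω' => by simp only [Prod.mk.injEq]; exact ⟨fun hc => hc.2, fun hc => ⟨h ω ω', hc⟩⟩)]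
  ring

end Ident

section Step
variable {Ω α1 α2 α3 α4 α5 α6 : Type*} [Fintype Ω]
  [Fintype α1] [DecidableEq α1] [Fintype α2] [DecidableEq α2]
  [Fintype α3] [DecidableEq α3] [Fintype α4] [DecidableEq α4]
  [Fintype α5] [DecidableEq α5] [Fintype α6] [DecidableEq α6]

lemma step_lemma (p : Ω → ℝ) (hp : ∀ ω, 0 ≤ p ω) (hp1 : ∑ ω, p ω = 1)
    (X : Ω → α1) (Y : Ω → α2) (Mj : Ω → α3) (Ej : Ω → α4) (Zj : Ω → α5) (E' : Ω → α6)
    (ε : ℝ)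
    (hM : mutualInfo p Mj (fun ω => (Ej ω, Zj ω)) ≤ ε)
    (hE : mutualInfo p Ej (fun ω => (Mj ω, Zj ω)) ≤ ε)
    (hMk : condMutualInfo p (fun ω => (X ω, Y ω)) (fun ω => (Mj ω, Ej ω, Zj ω)) E' = 0) :
    mutualInfo p Ej (fun ω => ((X ω, Y ω), (Mj ω, Zj ω)))
        ≤ ε + mutualInfo p (fun ω => (X ω, Y ω)) E' ∧
    mutualInfo p (fun ω => (X ω, Mj ω)) (fun ω => (Y ω, Zj ω))
        ≤ mutualInfo p X Y + ε + mutualInfo p (fun ω => (X ω, Y ω)) E' := by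
  have hΩ : Nonempty Ω := nonempty_of_sum_one p hp1
  set A : Ω → α1 × α2 := fun ω => (X ω, Y ω) with hA
  set MZ : Ω → α3 × α5 := fun ω => (Mj ω, Zj ω) with hMZ
  set B : Ω → α3 × α4 × α5 := fun ω => (Mj ω, Ej ω, Zj ω) with hB
  -- key_i : I(A;MZ) + I(A;Ej|MZ) ≤ I(A;E')
  have e1 : mutualInfo p A (fun ω => (B ω, E' ω)) = mutualInfo p A E' := by
    rw [chain2, hMk, add_zero]
  have e2 : mutualInfo p A (fun ω => (B ω, E' ω))
      = mutualInfo p A (fun ω => ((E' ω, Ej ω), MZ ω)) := by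
    apply mutualInfo_congr_right p hΩ
    intro ω ω'
    simp only [hB, hMZ, Prod.mk.injEq]
    tauto
  have e3 : mutualInfo p A (fun ω => ((E' ω, Ej ω), MZ ω))
      = mutualInfo p A MZ + condMutualInfo p A (fun ω => (E' ω, Ej ω)) MZ :=
    chain2 p A (fun ω => (E' ω, Ej ω)) MZ
  have e4 : condMutualInfo p A (fun ω => (E' ω, Ej ω)) MZ
      = condMutualInfo p A Ej MZ + condMutualInfo p A E' (fun ω => (Ej ω, MZ ω)) :=
    cond_chain p hΩ A E' Ej MZ
  have n1 : 0 ≤ condMutualInfo p A E' (fun ω => (Ej ω, MZ ω)) :=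
    condMutualInfo_nonneg' p hp hp1 _ _ _
  have key_i : mutualInfo p A MZ + condMutualInfo p A Ej MZ ≤ mutualInfo p A E' := by
    linarith
  have nAMZ : 0 ≤ mutualInfo p A MZ := mutualInfo_nonneg' p hp hp1 _ _
  have nAEjMZ : 0 ≤ condMutualInfo p A Ej MZ := condMutualInfo_nonneg' p hp hp1 _ _ _
  constructor
  · -- part (a)
    have a1 : mutualInfo p Ej (fun ω => (A ω, MZ ω))
        = mutualInfo p Ej MZ + condMutualInfo p Ej A MZ := chain2 p Ej A MZ
    have a2 : condMutualInfo p Ej A MZ = condMutualInfo p A Ej MZ := cmi_symm p hΩ _ _ _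
    have : mutualInfo p Ej (fun ω => ((X ω, Y ω), (Mj ω, Zj ω)))
        = mutualInfo p Ej (fun ω => (A ω, MZ ω)) := rfl
    rw [this]
    linarith
  · -- part (b)
    set W : Ω → α2 × α5 := fun ω => (Y ω, Zj ω) with hWd
    have b0 : mutualInfo p (fun ω => (X ω, Mj ω)) W
        = mutualInfo p W (fun ω => (X ω, Mj ω)) := mutualInfo_comm' p hΩ _ _
    have b1 : mutualInfo p W (fun ω => (X ω, Mj ω))
        = mutualInfo p W (fun ω => (Mj ω, X ω)) := by
      apply mutualInfo_congr_right p hΩ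
      intro ω ω'; simp only [Prod.mk.injEq]; tauto
    have b2 : mutualInfo p W (fun ω => (Mj ω, X ω))
        = mutualInfo p W X + condMutualInfo p W Mj X := chain2 p W Mj X
    have b3 : mutualInfo p W X = mutualInfo p X W := mutualInfo_comm' p hΩ _ _
    have b4 : mutualInfo p X W = mutualInfo p X (fun ω => (Zj ω, Y ω)) := by
      apply mutualInfo_congr_right p hΩ
      intro ω ω'; simp only [hWd, Prod.mk.injEq]; tauto
    have b5 : mutualInfo p X (fun ω => (Zj ω, Y ω))
        = mutualInfo p X Y + condMutualInfo p X Zj Y := chain2 p X Zj Y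
    have b6 : condMutualInfo p X Zj Y = condMutualInfo p Zj X Y := cmi_symm p hΩ _ _ _
    have b7 : mutualInfo p Zj A = mutualInfo p Zj Y + condMutualInfo p Zj X Y :=
      chain2 p Zj X Y
    have b7' : mutualInfo p Zj A = mutualInfo p A Zj := mutualInfo_comm' p hΩ _ _
    have nZjY : 0 ≤ mutualInfo p Zj Y := mutualInfo_nonneg' p hp hp1 _ _
    have b8 : condMutualInfo p W Mj X = condMutualInfo p Mj W X := cmi_symm p hΩ _ _ _
    have b9 : mutualInfo p Mj (fun ω => (W ω, X ω))
        = mutualInfo p Mj X + condMutualInfo p Mj W X := chain2 p Mj W X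
    have nMjX : 0 ≤ mutualInfo p Mj X := mutualInfo_nonneg' p hp hp1 _ _
    have b10 : mutualInfo p Mj (fun ω => (W ω, X ω))
        = mutualInfo p Mj (fun ω => (A ω, Zj ω)) := by
      apply mutualInfo_congr_right p hΩ
      intro ω ω'; simp only [hWd, hA, Prod.mk.injEq]; tauto
    have b11 : mutualInfo p Mj (fun ω => (A ω, Zj ω))
        = mutualInfo p Mj Zj + condMutualInfo p Mj A Zj := chain2 p Mj A Zj
    have b12 : mutualInfo p Mj (fun ω => (Ej ω, Zj ω))
        = mutualInfo p Mj Zj + condMutualInfo p Mj Ej Zj := chain2 p Mj Ej Zj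
    have nMjEjZj : 0 ≤ condMutualInfo p Mj Ej Zj := condMutualInfo_nonneg' p hp hp1 _ _ _
    have b13 : condMutualInfo p Mj A Zj = condMutualInfo p A Mj Zj := cmi_symm p hΩ _ _ _
    have b14 : mutualInfo p A MZ = mutualInfo p A Zj + condMutualInfo p A Mj Zj :=
      chain2 p A Mj Zj
    linarith
end Step

def hist {Ω : Type*} {m : ℕ} {β : Fin m → Type*} (M : (j : Fin m) → Ω → β j) (k : ℕ) (ω : Ω) :
    (i : {i : Fin m // i.val < k}) → β i.1 := fun i => M i.1 ω

lemma hist_zero {Ω : Type*} {m : ℕ} {β : Fin m → Type*} (M : (j : Fin m) → Ω → β j)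
    (ω ω' : Ω) : hist M 0 ω = hist M 0 ω' :=
  funext fun i => absurd i.2 (Nat.not_lt_zero _)

lemma hist_succ_iff {Ω : Type*} {m : ℕ} {β : Fin m → Type*} (M : (j : Fin m) → Ω → β j)
    {n : ℕ} (h : n < m) (ω ω' : Ω) :
    hist M (n+1) ω = hist M (n+1) ω' ↔
      (hist M n ω = hist M n ω' ∧ M ⟨n, h⟩ ω = M ⟨n, h⟩ ω') := by
  constructor
  · intro H
    exact ⟨funext fun i => congrFun H ⟨i.1, Nat.lt_succ_of_lt i.2⟩,
      congrFun H ⟨⟨n, h⟩, Nat.lt_succ_self n⟩⟩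
  · rintro ⟨H1, H2⟩
    funext i
    show M i.1 ω = M i.1 ω'
    by_cases hi : i.1.val < n
    · exact congrFun H1 ⟨i.1, hi⟩
    · have hieq : i.1 = ⟨n, h⟩ := Fin.ext (show i.1.val = n from by have := i.2; omega)
      rw [hieq]
      exact H2

lemma hist_full_iff {Ω : Type*} {m : ℕ} {β : Fin m → Type*} (M : (j : Fin m) → Ω → β j)
    (ω ω' : Ω) :
    hist M m ω = hist M m ω' ↔ (fun i : Fin m => M i ω) = (fun i : Fin m => M i ω') := by
  constructor
  · intro H; funext i; exact congrFun H ⟨i, i.isLt⟩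
  · intro H; funext i; exact congrFun H i.1


/-- under per-block leakage bounds for both `M_j` and `E_j` and the chaining
Markov condition, the total leakage satisfies `I(M^m; Z^m) ≤ ε·m·(m+1)/2`. -/
theorem chaining_total_leakage_le {Ω : Type*} [Fintype Ω]
    (p : Ω → ℝ) (hp : ∀ ω, 0 ≤ p ω) (hp1 : ∑ ω, p ω = 1)
    (m : ℕ) (α β γ : Fin m → Type*)
    [∀ j, Fintype (α j)] [∀ j, DecidableEq (α j)]
    [∀ j, Fintype (β j)] [∀ j, DecidableEq (β j)]
    [∀ j, Fintype (γ j)] [∀ j, DecidableEq (γ j)]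
    (E : (j : Fin m) → Ω → α j) (M : (j : Fin m) → Ω → β j) (Z : (j : Fin m) → Ω → γ j)
    (ε : ℝ) (hε : 0 ≤ ε)
    (h1 : ∀ j : Fin m, mutualInfo p (M j) (fun ω => (E j ω, Z j ω)) ≤ ε)
    (h1' : ∀ j : Fin m, mutualInfo p (E j) (fun ω => (M j ω, Z j ω)) ≤ ε)
    (h2 : ∀ j : Fin m, 0 < j.val →
      condMutualInfo p
        (fun ω => ((fun i : {i : Fin m // i.val < j.val} => M i.1 ω),
                   (fun i : {i : Fin m // i.val < j.val} => Z i.1 ω)))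
        (fun ω => (M j ω, E j ω, Z j ω))
        (E ⟨j.val - 1, Nat.lt_of_le_of_lt (Nat.sub_le _ _) j.isLt⟩) = 0) :
    mutualInfo p (fun ω => (fun i : Fin m => M i ω)) (fun ω => (fun i : Fin m => Z i ω))
      ≤ ε * m * (m + 1) / 2 := by
  have hΩ : Nonempty Ω := nonempty_of_sum_one p hp1
  have key : ∀ n : ℕ, n ≤ m →
      (mutualInfo p (hist M n) (hist Z n) ≤ ε * n * (n + 1) / 2 ∧
       ∀ (_ : 0 < n) (hnm : n - 1 < m),
         mutualInfo p (fun ω => (hist M n ω, hist Z n ω)) (E ⟨n - 1, hnm⟩) ≤ ε * n) := by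
    intro n
    induction n with
    | zero =>
      intro _
      constructor
      · rw [mutualInfo_const_left p hp1 _ (hist_zero M)]
        norm_num
      · intro h; exact absurd h (lt_irrefl 0)
    | succ n ih =>
      intro hn1
      have hnm : n < m := hn1
      obtain ⟨ihT, ihS⟩ := ih (le_of_lt hnm)
      set j : Fin m := ⟨n, hnm⟩ with hj
      obtain ⟨A', instF, instD, E', hMk, hc⟩ :
          ∃ (A' : Type _) (_ : Fintype A') (_ : DecidableEq A') (E' : Ω → A'),
            condMutualInfo p (fun ω => (hist M n ω, hist Z n ω))
              (fun ω => (M j ω, E j ω, Z j ω)) E' = 0 ∧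
            mutualInfo p (fun ω => (hist M n ω, hist Z n ω)) E' ≤ ε * n := by
        by_cases hn0 : n = 0
        · subst hn0
          refine ⟨α j, inferInstance, inferInstance, E j, ?_, ?_⟩
          · apply cmi_const_left p hΩ
            intro ω ω'
            rw [hist_zero M ω ω', hist_zero Z ω ω']
          · rw [mutualInfo_const_left p hp1 _
              (fun ω ω' => by rw [hist_zero M ω ω', hist_zero Z ω ω'])]
            norm_num
        · have hn0' : 0 < n := Nat.pos_of_ne_zero hn0
          have hnm' : n - 1 < m := by omega
          refine ⟨α ⟨n - 1, hnm'⟩, inferInstance, inferInstance, E ⟨n - 1, hnm'⟩, ?_, ?_⟩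
          · exact h2 j hn0'
          · exact ihS hn0' hnm'
      obtain ⟨stepA, stepB⟩ := step_lemma p hp hp1 (hist M n) (hist Z n) (M j) (E j) (Z j)
        E' ε (h1 j) (h1' j) hMk
      constructor
      · -- T part
        have cM : ∀ ω ω', hist M (n+1) ω = hist M (n+1) ω'
            ↔ ((hist M n ω, M j ω) = (hist M n ω', M j ω')) := by
          intro ω ω'
          rw [hist_succ_iff M hnm ω ω']
          simp only [Prod.mk.injEq]
          exact Iff.rfl
        have cZ : ∀ ω ω', hist Z (n+1) ω = hist Z (n+1) ω'
            ↔ ((hist Z n ω, Z j ω) = (hist Z n ω', Z j ω')) := by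
          intro ω ω'
          rw [hist_succ_iff Z hnm ω ω']
          simp only [Prod.mk.injEq]
          exact Iff.rfl
        have conv1 : mutualInfo p (hist M (n+1)) (hist Z (n+1))
            = mutualInfo p (fun ω => (hist M n ω, M j ω)) (fun ω => (hist Z n ω, Z j ω)) := by
          rw [mutualInfo_congr_left p hΩ _ cM, mutualInfo_congr_right p hΩ _ cZ]
        rw [conv1]
        have harith : ε * (↑(n+1)) * (↑(n+1) + 1) / 2
            = ε * ↑n * (↑n + 1) / 2 + ε + ε * ↑n := by push_cast; ring
        rw [harith]
        linarith
      · -- S part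
        intro _ hq
        have conv2 : mutualInfo p (fun ω => (hist M (n+1) ω, hist Z (n+1) ω)) (E ⟨n+1-1, hq⟩)
            = mutualInfo p (E j)
              (fun ω => ((hist M n ω, hist Z n ω), (M j ω, Z j ω))) := by
          rw [mutualInfo_comm' p hΩ]
          apply mutualInfo_congr_right p hΩ
          intro ω ω'
          simp only [Prod.mk.injEq, hist_succ_iff M hnm ω ω', hist_succ_iff Z hnm ω ω']
          tauto
        rw [conv2]
        have : ε * (↑(n+1)) = ε + ε * ↑n := by push_cast; ring
        rw [this]
        linarith
  obtain ⟨hT, _⟩ := key m le_rfl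
  have conv : mutualInfo p (fun ω => (fun i : Fin m => M i ω)) (fun ω => (fun i : Fin m => Z i ω))
      = mutualInfo p (hist M m) (hist Z m) := by
    rw [mutualInfo_congr_left p hΩ _ (fun ω ω' => (hist_full_iff M ω ω').symm),
      mutualInfo_congr_right p hΩ _ (fun ω ω' => (hist_full_iff Z ω ω').symm)]
  rw [conv]
  exact hT
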